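/- arXiv:2510.15108 — 7 statements merged into one kernel-verified Lean document; each statement's English description precedes it below -/
import Mathlib

section
/- The kernel 𝕂_{sp} = {w ∈ ZMod (s*p) : w^(2^i) = 1 for some natural number i} has exactly 2^(k+l) elements. -/
/-- The kernel `𝕂_{sp}`: elements some iterated square of which equals `1`. -/
def Ksp (s p : ℕ) : Set (ZMod (s*p)) := {w | ∃ i : ℕ, w ^ (2 ^ i) = 1}

/-- In `ZMod t` for a prime `t = 2^a * c + 1` with `c` odd, any `2`-power root of
unity already satisfies `x ^ 2^a = 1`. -/
lemma pow_two_pow_eq_one_of_pow_eq_one {t a c : ℕ} (ht : t.Prime) (hc : Odd c)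
    (hteq : t = 2 ^ a * c + 1) {x : ZMod t} {i : ℕ} (hx : x ^ (2 ^ i) = 1) :
    x ^ (2 ^ a) = 1 := by
  haveI : Fact t.Prime := ⟨ht⟩
  have hxu : IsUnit x := IsUnit.of_pow_eq_one hx (pow_ne_zero _ two_ne_zero)
  obtain ⟨u, rfl⟩ := hxu
  have hu : u ^ (2 ^ i) = 1 := Units.ext (by push_cast [hx]; simp [hx])
  have h1 : orderOf u ∣ 2 ^ i := orderOf_dvd_of_pow_eq_one hu
  have h2 : orderOf u ∣ 2 ^ a * c := by
    have := orderOf_dvd_card (x := u)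
    rw [ZMod.card_units_eq_totient, Nat.totient_prime ht] at this
    have ht1 : t - 1 = 2 ^ a * c := by omega
    rwa [ht1] at this
  obtain ⟨b, hb, hob⟩ := (Nat.dvd_prime_pow Nat.prime_two).mp h1
  have hcop : Nat.Coprime (2 ^ b) c :=
    Nat.Coprime.pow_left _ (Nat.coprime_two_left.mpr hc)
  have h3 : orderOf u ∣ 2 ^ a := by
    rw [hob] at h2 ⊢
    exact (Nat.Coprime.dvd_of_dvd_mul_right hcop h2)
  have : u ^ (2 ^ a) = 1 := orderOf_dvd_iff_pow_eq_one.mp h3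
  calc (u : ZMod t) ^ (2 ^ a) = ((u ^ (2 ^ a) : (ZMod t)ˣ) : ZMod t) := by push_cast; ring
    _ = 1 := by rw [this]; rfl

/-- Counting: in `ZMod t` for a prime `t = 2^a * c + 1` with `c` odd, the set of
solutions of `x ^ 2^a = 1` has exactly `2^a` elements. -/
lemma ncard_pow_two_pow_eq_one {t a c : ℕ} (ht : t.Prime) (hc : Odd c)
    (hteq : t = 2 ^ a * c + 1) :
    {x : ZMod t | x ^ (2 ^ a) = 1}.ncard = 2 ^ a := by
  haveI : Fact t.Prime := ⟨ht⟩
  have hcard : Fintype.card (ZMod t)ˣ = 2 ^ a * c := by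
    rw [ZMod.card_units_eq_totient, Nat.totient_prime ht, hteq, Nat.add_sub_cancel]
  obtain ⟨g, hg⟩ := IsCyclic.exists_generator (α := (ZMod t)ˣ)
  have hord : orderOf g = 2 ^ a * c := by
    rw [orderOf_eq_card_of_forall_mem_zpowers hg, Nat.card_eq_fintype_card, hcard]
  have hprim : IsPrimitiveRoot (g : ZMod t) (2 ^ a * c) := by
    rw [← hord]
    exact (IsPrimitiveRoot.coe_units_iff).mpr (IsPrimitiveRoot.orderOf g)
  have hpos : 0 < 2 ^ a * c := Nat.mul_pos (Nat.pow_pos (n := a) two_pos) hc.pos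
  have hprim2 : IsPrimitiveRoot ((g : ZMod t) ^ c) (2 ^ a) :=
    hprim.pow hpos (mul_comm (2 ^ a) c)
  have hset : {x : ZMod t | x ^ (2 ^ a) = 1} =
      ↑(Polynomial.nthRootsFinset (2 ^ a) (1 : ZMod t)) := by
    ext x
    simp [Polynomial.mem_nthRootsFinset (Nat.pow_pos (n := a) two_pos) (1 : ZMod t)]
  rw [hset, Set.ncard_coe_finset, hprim2.card_nthRootsFinset]

theorem stmt_9 (s p k l q r : ℕ) (hs : s.Prime) (hp : p.Prime) (hsp : s ≠ p)
    (hk : 1 ≤ k) (hl : 1 ≤ l) (hq : Odd q) (hr : Odd r)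
    (hseq : s = 2 ^ k * q + 1) (hpeq : p = 2 ^ l * r + 1) :
    (Ksp s p).ncard = 2 ^ (k + l) := by
  have hcop : Nat.Coprime s p := (Nat.coprime_primes hs hp).mpr hsp
  haveI : NeZero (s * p) := ⟨Nat.mul_ne_zero hs.pos.ne' hp.pos.ne'⟩
  let e : ZMod (s * p) ≃+* ZMod s × ZMod p := ZMod.chineseRemainder hcop
  set A : Set (ZMod s) := {x | x ^ (2 ^ k) = 1} with hA
  set B : Set (ZMod p) := {y | y ^ (2 ^ l) = 1} with hB
  have hKsp : Ksp s p = ⇑e ⁻¹' (A ×ˢ B) := by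
    ext w
    constructor
    · rintro ⟨i, hw⟩
      have hew : (e w) ^ (2 ^ i) = 1 := by rw [← map_pow, hw, map_one]
      have h1 : (e w).1 ^ (2 ^ i) = 1 := congrArg Prod.fst hew
      have h2 : (e w).2 ^ (2 ^ i) = 1 := congrArg Prod.snd hew
      exact ⟨pow_two_pow_eq_one_of_pow_eq_one hs hq hseq h1,
        pow_two_pow_eq_one_of_pow_eq_one hp hr hpeq h2⟩
    · rintro ⟨h1, h2⟩
      refine ⟨k + l, e.injective ?_⟩
      rw [map_pow, map_one]
      have : (e w) ^ (2 ^ (k + l)) =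
          ((e w).1 ^ (2 ^ (k + l)), (e w).2 ^ (2 ^ (k + l))) := rfl
      rw [this, Prod.mk_eq_one]
      constructor
      · rw [pow_add, pow_mul, h1, one_pow]
      · rw [pow_add, mul_comm (2 ^ k), pow_mul, h2, one_pow]
  rw [hKsp]
  have hpre : (⇑e ⁻¹' (A ×ˢ B)).ncard = (A ×ˢ B).ncard := by
    rw [← Set.ncard_image_of_injective (A ×ˢ B) e.symm.injective]
    congr 1
    ext w
    simp only [Set.mem_preimage, Set.mem_image]
    constructor
    · intro h; exact ⟨e w, h, e.symm_apply_apply w⟩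
    · rintro ⟨z, hz, rfl⟩; simpa using hz
  rw [hpre]
  have hprod : (A ×ˢ B).ncard = A.ncard * B.ncard := by
    rw [← Nat.card_coe_set_eq, ← Nat.card_coe_set_eq, ← Nat.card_coe_set_eq,
      Nat.card_congr (Equiv.Set.prod A B), Nat.card_prod]
  rw [hprod, ncard_pow_two_pow_eq_one hs hq hseq, ncard_pow_two_pow_eq_one hp hr hpeq,
    ← pow_add]
end

section
/- Suppose w ∈ ZMod (s*p) is a cyclic element of the squaring map, i.e. w^(2^n) = w for some natural number n ≥ 1, and let (x, y) be the unique pair of natural numbers with x < p, y < s and w = x·s + y·p in ZMod (s*p). Then (x·s)^(2^n) = x·s and (y·p)^(2^n) = y·p in ZMod (s*p); that is, both components of the decomposition are themselves cyclic elements of the squaring map. -/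
theorem stmt_11 (s p : ℕ) (hs : s.Prime) (hp : p.Prime) (hsp : s ≠ p)
    (hso : Odd s) (hpo : Odd p)
    (w : ZMod (s*p)) (n : ℕ) (hn : 1 ≤ n) (hw : w ^ (2 ^ n) = w)
    (x y : ℕ) (hx : x < p) (hy : y < s)
    (hdec : w = (x : ZMod (s*p)) * (s : ZMod (s*p)) + (y : ZMod (s*p)) * (p : ZMod (s*p))) :
    ((x : ZMod (s*p)) * (s : ZMod (s*p))) ^ (2 ^ n) = (x : ZMod (s*p)) * (s : ZMod (s*p)) ∧
    ((y : ZMod (s*p)) * (p : ZMod (s*p))) ^ (2 ^ n) = (y : ZMod (s*p)) * (p : ZMod (s*p)) := by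
  have hcop : Nat.Coprime s p := (Nat.coprime_primes hs hp).mpr hsp
  have hsp0 : s * p ≠ 0 := Nat.mul_ne_zero hs.pos.ne' hp.pos.ne'
  haveI : NeZero (s * p) := ⟨hsp0⟩
  have hzero : (2 ^ n) ≠ 0 := (pow_pos (by norm_num : (0:ℕ) < 2) n).ne'
  set fs : ZMod (s*p) →+* ZMod s := ZMod.castHom (dvd_mul_right s p) _ with hfs
  set fp : ZMod (s*p) →+* ZMod p := ZMod.castHom (dvd_mul_left p s) _ with hfp
  have hinj : ∀ a : ZMod (s*p), fs a = 0 → fp a = 0 → a = 0 := by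
    intro a h1 h2
    have e1 : ((a.val : ℕ) : ZMod s) = 0 := by
      rwa [ZMod.natCast_val, ← ZMod.castHom_apply (h := dvd_mul_right s p)]
    have e2 : ((a.val : ℕ) : ZMod p) = 0 := by
      rwa [ZMod.natCast_val, ← ZMod.castHom_apply (h := dvd_mul_left p s)]
    have d1 : s ∣ a.val := (ZMod.natCast_eq_zero_iff _ _).mp e1
    have d2 : p ∣ a.val := (ZMod.natCast_eq_zero_iff _ _).mp e2
    have d : s * p ∣ a.val := hcop.mul_dvd_of_dvd_of_dvd d1 d2
    have hv : a.val = 0 := Nat.eq_zero_of_dvd_of_lt d (ZMod.val_lt a)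
    exact (ZMod.val_eq_zero a).mp hv
  have key : ∀ a : ZMod (s*p),
      fs a ^ (2^n) = fs a → fp a ^ (2^n) = fp a → a ^ (2^n) = a := by
    intro a h1 h2
    have := hinj (a ^ (2^n) - a) ?_ ?_
    · linear_combination this
    · rw [map_sub, map_pow, h1, sub_self]
    · rw [map_sub, map_pow, h2, sub_self]
  have hs0 : fs ((x : ZMod (s*p)) * (s : ZMod (s*p))) = 0 := by
    rw [map_mul, map_natCast, map_natCast, ZMod.natCast_self, mul_zero]
  have hp0 : fp ((y : ZMod (s*p)) * (p : ZMod (s*p))) = 0 := by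
    rw [map_mul, map_natCast, map_natCast, ZMod.natCast_self, mul_zero]
  have hws : fs w = fs ((y : ZMod (s*p)) * (p : ZMod (s*p))) := by
    rw [hdec, map_add, hs0, zero_add]
  have hwp : fp w = fp ((x : ZMod (s*p)) * (s : ZMod (s*p))) := by
    rw [hdec, map_add, hp0, add_zero]
  constructor
  · apply key
    · rw [hs0]; exact zero_pow hzero
    · rw [← hwp, ← map_pow, hw]
  · apply key
    · rw [← hws, ← map_pow, hw]
    · rw [hp0]; exact zero_pow hzero
end

section
/- Suppose w ∈ ZMod (s*p) satisfies w^(2^n) = w for some natural number n ≥ 1. Then the least natural number μ ≥ 1 with (w mod s)^(2^μ) = w mod s and the least natural number ν ≥ 1 with (w mod p)^(2^ν) = w mod p both exist, and the least natural number n₀ ≥ 1 with w^(2^{n₀}) = w in ZMod (s*p) equals lcm(μ, ν). (The length of the cycle of w under squaring in ZMod (s*p) is the least common multiple of the lengths of its two inner cycles modulo s and modulo p.) -/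
/-- Reduction `ZMod (s*p) → ZMod s`. -/
def modS (s p : ℕ) : ZMod (s*p) →+* ZMod s := ZMod.castHom (dvd_mul_right s p) (ZMod s)
/-- Reduction `ZMod (s*p) → ZMod p`. -/
def modP (s p : ℕ) : ZMod (s*p) →+* ZMod p := ZMod.castHom (dvd_mul_left p s) (ZMod p)

lemma cycle_mul {M : Type*} [Monoid M] (u : M) (a : ℕ) (h : u ^ (2 ^ a) = u) :
    ∀ k : ℕ, u ^ (2 ^ (k * a)) = u := by
  intro k
  induction k with
  | zero => simp
  | succ k ih =>
    have : (k + 1) * a = k * a + a := by ring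
    rw [this, pow_add, pow_mul, ih, h]

lemma cycle_dvd_iff {M : Type*} [Monoid M] (u : M) (μ : ℕ)
    (h : IsLeast {m : ℕ | 1 ≤ m ∧ u ^ (2 ^ m) = u} μ) (m : ℕ) :
    u ^ (2 ^ m) = u ↔ μ ∣ m := by
  obtain ⟨⟨hμ1, hμ⟩, hlb⟩ := h
  constructor
  · intro hm
    induction m using Nat.strong_induction_on with
    | _ m ih =>
      rcases Nat.lt_or_ge m μ with hlt | hge
      · rcases Nat.eq_zero_or_pos m with rfl | hmp
        · exact dvd_zero μ
        · exact absurd (hlb ⟨hmp, hm⟩) (Nat.not_le.mpr hlt)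
      · have hsub : u ^ (2 ^ (m - μ)) = u := by
          conv_lhs => rw [← hμ]
          rw [← pow_mul, ← pow_add]
          rwa [Nat.add_sub_cancel' hge]
        have h2 : μ ∣ m - μ := ih (m - μ) (by omega) hsub
        have := Nat.dvd_add h2 (dvd_refl μ)
        rwa [Nat.sub_add_cancel hge] at this
  · rintro ⟨k, rfl⟩
    rw [mul_comm]
    exact cycle_mul u μ hμ k

theorem stmt_12 (s p : ℕ) (hs : s.Prime) (hp : p.Prime) (hsp : s ≠ p)
    (hso : Odd s) (hpo : Odd p)
    (w : ZMod (s*p)) (n : ℕ) (hn : 1 ≤ n) (hw : w ^ (2 ^ n) = w) :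
    ∃ μ ν : ℕ,
      IsLeast {m : ℕ | 1 ≤ m ∧ (modS s p w) ^ (2 ^ m) = modS s p w} μ ∧
      IsLeast {m : ℕ | 1 ≤ m ∧ (modP s p w) ^ (2 ^ m) = modP s p w} ν ∧
      IsLeast {m : ℕ | 1 ≤ m ∧ w ^ (2 ^ m) = w} (Nat.lcm μ ν) := by
  have hcop : Nat.Coprime s p := (Nat.coprime_primes hs hp).mpr hsp
  haveI : NeZero (s * p) := ⟨Nat.mul_ne_zero hs.pos.ne' hp.pos.ne'⟩
  haveI : NeZero s := ⟨hs.pos.ne'⟩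
  haveI : NeZero p := ⟨hp.pos.ne'⟩
  -- injectivity of the pair of reductions
  have hker : ∀ z : ZMod (s * p), modS s p z = 0 → modP s p z = 0 → z = 0 := by
    intro z h1 h2
    have e1 : ((z.val : ℕ) : ZMod s) = 0 := by
      rw [ZMod.natCast_val]; exact h1
    have e2 : ((z.val : ℕ) : ZMod p) = 0 := by
      rw [ZMod.natCast_val]; exact h2
    rw [ZMod.natCast_eq_zero_iff] at e1 e2
    have : (s * p) ∣ z.val := Nat.Coprime.mul_dvd_of_dvd_of_dvd hcop e1 e2
    have : ((z.val : ℕ) : ZMod (s * p)) = 0 := (ZMod.natCast_eq_zero_iff _ _).mpr this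
    rwa [ZMod.natCast_val, ZMod.cast_id] at this
  have hinj : ∀ x y : ZMod (s * p), modS s p x = modS s p y → modP s p x = modP s p y → x = y := by
    intro x y h1 h2
    have := hker (x - y) (by rw [map_sub, h1, sub_self]) (by rw [map_sub, h2, sub_self])
    linear_combination this
  -- least elements mod s and mod p
  have hwS : (modS s p w) ^ (2 ^ n) = modS s p w := by rw [← map_pow, hw]
  have hwP : (modP s p w) ^ (2 ^ n) = modP s p w := by rw [← map_pow, hw]
  have hES : ∃ m : ℕ, 1 ≤ m ∧ (modS s p w) ^ (2 ^ m) = modS s p w := ⟨n, hn, hwS⟩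
  have hEP : ∃ m : ℕ, 1 ≤ m ∧ (modP s p w) ^ (2 ^ m) = modP s p w := ⟨n, hn, hwP⟩
  set μ := Nat.find hES with hμdef
  set ν := Nat.find hEP with hνdef
  have hμL : IsLeast {m : ℕ | 1 ≤ m ∧ (modS s p w) ^ (2 ^ m) = modS s p w} μ :=
    ⟨Nat.find_spec hES, fun m hm => Nat.find_le hm⟩
  have hνL : IsLeast {m : ℕ | 1 ≤ m ∧ (modP s p w) ^ (2 ^ m) = modP s p w} ν :=
    ⟨Nat.find_spec hEP, fun m hm => Nat.find_le hm⟩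
  refine ⟨μ, ν, hμL, hνL, ?_, ?_⟩
  · constructor
    · exact Nat.succ_le_of_lt (Nat.lcm_pos (hμL.1.1) (hνL.1.1))
    · apply hinj
      · rw [map_pow, (cycle_dvd_iff _ μ hμL _).mpr (Nat.dvd_lcm_left μ ν)]
      · rw [map_pow, (cycle_dvd_iff _ ν hνL _).mpr (Nat.dvd_lcm_right μ ν)]
  · intro m hm
    obtain ⟨hm1, hmw⟩ := hm
    have dS : μ ∣ m := (cycle_dvd_iff _ μ hμL m).mp (by rw [← map_pow, hmw])
    have dP : ν ∣ m := (cycle_dvd_iff _ ν hνL m).mp (by rw [← map_pow, hmw])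
    exact Nat.le_of_dvd (by omega) (Nat.lcm_dvd dS dP)
end

section
/- Let a ∈ ZMod s and b ∈ ZMod p be cyclic elements of the squaring map, with μ ≥ 1 the least natural number such that a^(2^μ) = a and ν ≥ 1 the least natural number such that b^(2^ν) = b. Let C = {w ∈ ZMod (s*p) : w mod s = a^(2^i) for some natural i, and w mod p = b^(2^j) for some natural j}. Then: (i) C has exactly μ·ν elements; (ii) for every w ∈ C, the squaring orbit {w^(2^i) : i ∈ ℕ} is contained in C and has exactly lcm(μ, ν) elements. Consequently C decomposes into exactly gcd(μ, ν) squaring orbits, each of length lcm(μ, ν). -/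
section Aux
variable {M : Type*} [Monoid M]

lemma pow_two_pow_add (a : M) (i j : ℕ) : (a ^ (2 ^ i)) ^ (2 ^ j) = a ^ (2 ^ (i + j)) := by
  rw [← pow_mul, ← pow_add]

lemma pow_periodic {a : M} {μ : ℕ} (h : a ^ (2 ^ μ) = a) (i k : ℕ) :
    a ^ (2 ^ (i + k * μ)) = a ^ (2 ^ i) := by
  induction k with
  | zero => simp
  | succ k ih =>
    have : i + (k + 1) * μ = μ + (i + k * μ) := by ring
    rw [this, ← pow_two_pow_add, h, ih]

lemma pow_mod_reduce {a : M} {μ : ℕ} (h : a ^ (2 ^ μ) = a) (i : ℕ) :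
    a ^ (2 ^ i) = a ^ (2 ^ (i % μ)) := by
  conv_lhs => rw [← Nat.mod_add_div' i μ, pow_periodic h]

lemma pow_eq_aux {a : M} {μ : ℕ} (hμ : IsLeast {n : ℕ | 1 ≤ n ∧ a ^ (2 ^ n) = a} μ)
    {r r' : ℕ} (hr' : r' < μ) (hlt : r < r') (heq : a ^ (2 ^ r) = a ^ (2 ^ r')) : False := by
  have h1 : (a ^ (2 ^ r)) ^ (2 ^ (μ - r')) = (a ^ (2 ^ r')) ^ (2 ^ (μ - r')) := by rw [heq]
  rw [pow_two_pow_add, pow_two_pow_add] at h1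
  have h2 : r' + (μ - r') = μ := by omega
  rw [h2, hμ.1.2] at h1
  have hmem : r + (μ - r') ∈ {n : ℕ | 1 ≤ n ∧ a ^ (2 ^ n) = a} := ⟨by omega, h1⟩
  have := hμ.2 hmem
  omega

lemma pow_eq_iff {a : M} {μ : ℕ} (hμ : IsLeast {n : ℕ | 1 ≤ n ∧ a ^ (2 ^ n) = a} μ)
    (i j : ℕ) : a ^ (2 ^ i) = a ^ (2 ^ j) ↔ i ≡ j [MOD μ] := by
  have hμ1 : 1 ≤ μ := hμ.1.1
  have hP := hμ.1.2
  constructor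
  · intro h
    rw [pow_mod_reduce hP i, pow_mod_reduce hP j] at h
    rcases lt_trichotomy (i % μ) (j % μ) with hlt | heq | hlt
    · exact absurd h (fun h => pow_eq_aux hμ (Nat.mod_lt _ (by omega)) hlt h)
    · exact heq
    · exact absurd h.symm (fun h => pow_eq_aux hμ (Nat.mod_lt _ (by omega)) hlt h)
  · intro h
    rw [pow_mod_reduce hP i, pow_mod_reduce hP j, h]

lemma orbit_ncard {a : M} {μ : ℕ} (hμ : IsLeast {n : ℕ | 1 ≤ n ∧ a ^ (2 ^ n) = a} μ) :
    {u : M | ∃ i : ℕ, u = a ^ (2 ^ i)}.ncard = μ := by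
  have hμ1 : 1 ≤ μ := hμ.1.1
  have hset : {u : M | ∃ i : ℕ, u = a ^ (2 ^ i)} = (fun i => a ^ (2 ^ i)) '' Set.Iio μ := by
    ext u
    constructor
    · rintro ⟨i, rfl⟩
      exact ⟨i % μ, Nat.mod_lt _ (by omega), (pow_mod_reduce hμ.1.2 i).symm⟩
    · rintro ⟨i, _, rfl⟩
      exact ⟨i, rfl⟩
  rw [hset, Set.ncard_image_of_injOn, ← Finset.coe_range, Set.ncard_coe_finset,
    Finset.card_range]
  intro i hi j hj h
  have hm := (pow_eq_iff hμ i j).mp h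
  simp only [Set.mem_Iio] at hi hj
  rwa [Nat.ModEq, Nat.mod_eq_of_lt hi, Nat.mod_eq_of_lt hj] at hm

lemma orbit_eq {w : M} {L : ℕ} (hL : IsLeast {n : ℕ | 1 ≤ n ∧ w ^ (2 ^ n) = w} L) (k : ℕ) :
    {u : M | ∃ i : ℕ, u = (w ^ (2 ^ k)) ^ (2 ^ i)} = {u : M | ∃ i : ℕ, u = w ^ (2 ^ i)} := by
  obtain ⟨L', rfl⟩ : ∃ L', L = L' + 1 := ⟨L - 1, by have := hL.1.1; omega⟩
  ext u
  constructor
  · rintro ⟨i, rfl⟩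
    exact ⟨k + i, by rw [pow_two_pow_add]⟩
  · rintro ⟨i, rfl⟩
    refine ⟨i + k * L', ?_⟩
    rw [pow_two_pow_add]
    have harg : k + (i + k * L') = i + k * (L' + 1) := by ring
    rw [harg, pow_periodic hL.1.2]

end Aux

theorem stmt_13 (s p : ℕ) (hs : s.Prime) (hp : p.Prime) (hsp : s ≠ p)
    (hso : Odd s) (hpo : Odd p)
    (a : ZMod s) (b : ZMod p) (μ ν : ℕ)
    (hμ : IsLeast {n : ℕ | 1 ≤ n ∧ a ^ (2 ^ n) = a} μ)
    (hν : IsLeast {n : ℕ | 1 ≤ n ∧ b ^ (2 ^ n) = b} ν) :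
    let C : Set (ZMod (s*p)) :=
      {w | (∃ i : ℕ, modS s p w = a ^ (2 ^ i)) ∧ (∃ j : ℕ, modP s p w = b ^ (2 ^ j))}
    C.ncard = μ * ν ∧
    (∀ w ∈ C, {u : ZMod (s*p) | ∃ i : ℕ, u = w ^ (2 ^ i)} ⊆ C ∧
      {u : ZMod (s*p) | ∃ i : ℕ, u = w ^ (2 ^ i)}.ncard = Nat.lcm μ ν) ∧
    {O : Set (ZMod (s*p)) | ∃ w ∈ C, O = {u | ∃ i : ℕ, u = w ^ (2 ^ i)}}.ncard
      = Nat.gcd μ ν := by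
  classical
  intro C
  have hμ1 : 1 ≤ μ := hμ.1.1
  have hν1 : 1 ≤ ν := hν.1.1
  have cop : Nat.Coprime s p := (Nat.coprime_primes hs hp).mpr hsp
  haveI : NeZero (s * p) := ⟨Nat.mul_ne_zero hs.pos.ne' hp.pos.ne'⟩
  set e := ZMod.chineseRemainder cop with he_def
  have he : ∀ w : ZMod (s*p), e w = (modS s p w, modP s p w) := by
    intro w
    have h1 : e.toRingHom = (modS s p).prod (modP s p) := RingHom.ext_zmod _ _
    have h2 := DFunLike.congr_fun h1 w
    rw [RingHom.prod_apply] at h2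
    exact h2
  have einj : ∀ x y : ZMod (s*p), modS s p x = modS s p y → modP s p x = modP s p y → x = y := by
    intro x y h1 h2
    apply e.injective
    rw [he x, he y, h1, h2]
  set A : Set (ZMod s) := {x | ∃ i : ℕ, x = a ^ (2 ^ i)} with hA
  set B : Set (ZMod p) := {x | ∃ j : ℕ, x = b ^ (2 ^ j)} with hB
  -- Part 1
  have part1 : C.ncard = μ * ν := by
    have hC : C = ⇑e ⁻¹' (A ×ˢ B) := by
      ext w
      simp only [C, A, B, Set.mem_preimage, he w, Set.mem_prod, Set.mem_setOf_eq]
    have himg : ⇑e ⁻¹' (A ×ˢ B) = ⇑e.symm '' (A ×ˢ B) := by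
      ext x
      constructor
      · intro hx; exact ⟨e x, hx, e.symm_apply_apply x⟩
      · rintro ⟨y, hy, rfl⟩; simpa [e.apply_symm_apply] using hy
    rw [hC, himg, Set.ncard_image_of_injective _ e.symm.injective,
      ← Nat.card_coe_set_eq, Nat.card_congr (Equiv.Set.prod A B), Nat.card_prod,
      Nat.card_coe_set_eq, Nat.card_coe_set_eq, orbit_ncard hμ, orbit_ncard hν]
  -- Part 2
  have horbC : ∀ w ∈ C, {u : ZMod (s*p) | ∃ i : ℕ, u = w ^ (2 ^ i)} ⊆ C := by
    rintro w ⟨⟨i₀, hi₀⟩, ⟨j₀, hj₀⟩⟩ u ⟨k, rfl⟩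
    constructor
    · exact ⟨i₀ + k, by rw [map_pow, hi₀, pow_two_pow_add]⟩
    · exact ⟨j₀ + k, by rw [map_pow, hj₀, pow_two_pow_add]⟩
  have hLw : ∀ w ∈ C, IsLeast {n : ℕ | 1 ≤ n ∧ w ^ (2 ^ n) = w} (Nat.lcm μ ν) := by
    rintro w ⟨⟨i₀, hi₀⟩, ⟨j₀, hj₀⟩⟩
    have hL1 : 1 ≤ Nat.lcm μ ν :=
      Nat.pos_of_ne_zero (Nat.lcm_ne_zero (by omega) (by omega))
    constructor
    · refine ⟨hL1, ?_⟩
      apply einj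
      · rw [map_pow, hi₀, pow_two_pow_add]
        refine (pow_eq_iff hμ _ _).mpr ?_
        simpa using (Nat.ModEq.add_left i₀
          (Nat.modEq_zero_iff_dvd.mpr (Nat.dvd_lcm_left μ ν)))
      · rw [map_pow, hj₀, pow_two_pow_add]
        refine (pow_eq_iff hν _ _).mpr ?_
        simpa using (Nat.ModEq.add_left j₀
          (Nat.modEq_zero_iff_dvd.mpr (Nat.dvd_lcm_right μ ν)))
    · rintro n ⟨hn1, hn2⟩
      have hs' : modS s p (w ^ 2 ^ n) = modS s p w := by rw [hn2]
      rw [map_pow, hi₀, pow_two_pow_add] at hs'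
      have hp' : modP s p (w ^ 2 ^ n) = modP s p w := by rw [hn2]
      rw [map_pow, hj₀, pow_two_pow_add] at hp'
      have hμd : μ ∣ n := by
        have h := (pow_eq_iff hμ _ _).mp hs'
        have h2 : i₀ + n ≡ i₀ + 0 [MOD μ] := by simpa using h
        exact Nat.modEq_zero_iff_dvd.mp (Nat.ModEq.add_left_cancel' i₀ h2)
      have hνd : ν ∣ n := by
        have h := (pow_eq_iff hν _ _).mp hp'
        have h2 : j₀ + n ≡ j₀ + 0 [MOD ν] := by simpa using h
        exact Nat.modEq_zero_iff_dvd.mp (Nat.ModEq.add_left_cancel' j₀ h2)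
      exact Nat.le_of_dvd (by omega) (Nat.lcm_dvd hμd hνd)
  refine ⟨part1, fun w hw => ⟨horbC w hw, orbit_ncard (hLw w hw)⟩, ?_⟩
  -- Part 3
  have hCfin : C.Finite := Set.toFinite C
  set o : ZMod (s*p) → Set (ZMod (s*p)) := fun w => {u | ∃ i : ℕ, u = w ^ (2 ^ i)} with ho
  have hT : {O : Set (ZMod (s*p)) | ∃ w ∈ C, O = {u | ∃ i : ℕ, u = w ^ (2 ^ i)}} = o '' C := by
    ext O
    simp only [Set.mem_setOf_eq, Set.mem_image, o]
    constructor
    · rintro ⟨w, hw, h⟩; exact ⟨w, hw, h.symm⟩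
    · rintro ⟨w, hw, h⟩; exact ⟨w, hw, h.symm⟩
  have hTfin : (o '' C).Finite := hCfin.image o
  have hfib : ∀ w ∈ C, ∀ x ∈ C, (o x = o w ↔ x ∈ o w) := by
    intro w hw x _
    constructor
    · intro h; rw [← h]; exact ⟨0, by simp⟩
    · rintro ⟨k, rfl⟩; exact orbit_eq (hLw w hw) k
  have hmaps : ∀ x ∈ hCfin.toFinset, o x ∈ hTfin.toFinset := by
    intro x hx
    rw [hTfin.mem_toFinset]
    exact ⟨x, hCfin.mem_toFinset.mp hx, rfl⟩
  have hfibcard : ∀ bb ∈ hTfin.toFinset,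
      (hCfin.toFinset.filter fun x => o x = bb).card = Nat.lcm μ ν := by
    intro bb hbb
    rw [hTfin.mem_toFinset] at hbb
    obtain ⟨w, hw, rfl⟩ := hbb
    have hset : ↑(hCfin.toFinset.filter fun x => o x = o w) = o w := by
      ext x
      simp only [Finset.coe_filter, Set.mem_setOf_eq, hCfin.mem_toFinset]
      constructor
      · rintro ⟨hxC, h⟩; exact (hfib w hw x hxC).mp h
      · intro hxw; exact ⟨horbC w hw hxw, (hfib w hw x (horbC w hw hxw)).mpr hxw⟩
    have hcg := congrArg Set.ncard hset
    rwa [Set.ncard_coe_finset, orbit_ncard (hLw w hw)] at hcg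
  have key : hCfin.toFinset.card = hTfin.toFinset.card * Nat.lcm μ ν := by
    rw [Finset.card_eq_sum_card_fiberwise hmaps, Finset.sum_congr rfl hfibcard,
      Finset.sum_const, smul_eq_mul]
  have hCcard : hCfin.toFinset.card = μ * ν := by
    rw [← Set.ncard_eq_toFinset_card _ hCfin]; exact part1
  have hL1 : 1 ≤ Nat.lcm μ ν :=
    Nat.pos_of_ne_zero (Nat.lcm_ne_zero (by omega) (by omega))
  rw [hT, Set.ncard_eq_toFinset_card _ hTfin]
  apply Nat.eq_of_mul_eq_mul_right hL1
  rw [← key, hCcard, ← Nat.gcd_mul_lcm μ ν]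
end

section
/- Let a ∈ ZMod (s*p) be a unit that is a cyclic element of the squaring map, i.e. a^(2^m) = a for some natural number m ≥ 1. Then for every natural number n, the set {x ∈ ZMod (s*p) : x^(2^n) = a} has the same cardinality as the set {x ∈ ZMod (s*p) : x^(2^n) = 1}. (The tree rooted at any cyclic element of ZMod (s*p) is a translate of the tree of unity, obtained by multiplying levelwise by the arc through a.) -/
theorem stmt_14 (s p : ℕ) (hs : s.Prime) (hp : p.Prime) (hsp : s ≠ p)
    (hso : Odd s) (hpo : Odd p)
    (a : ZMod (s*p)) (ha : IsUnit a)
    (m : ℕ) (hm : 1 ≤ m) (hcyc : a ^ (2 ^ m) = a) :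
    ∀ n : ℕ, {x : ZMod (s*p) | x ^ (2 ^ n) = a}.ncard
      = {x : ZMod (s*p) | x ^ (2 ^ n) = 1}.ncard := by
  intro n
  -- a^(2^m - 1) = 1
  have hpow : a ^ (2 ^ m - 1) = 1 := by
    have h2 : 1 ≤ 2 ^ m := Nat.one_le_two_pow
    have h1 : a ^ (2 ^ m - 1) * a = 1 * a := by
      rw [one_mul, ← pow_succ, Nat.sub_add_cancel h2, hcyc]
    exact ha.mul_right_cancel h1
  have hdodd : Odd (2 ^ m - 1) := by
    have he : Even (2 ^ m) := by
      exact Nat.even_pow.mpr ⟨even_two, by omega⟩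
    exact Nat.Even.sub_odd (Nat.one_le_two_pow) he odd_one
  set o := orderOf a with ho
  have hod : o ∣ 2 ^ m - 1 := orderOf_dvd_of_pow_eq_one hpow
  have hoodd : Odd o := hdodd.of_dvd_nat hod
  have hco : Nat.Coprime (2 ^ n) o :=
    Nat.Coprime.pow_left n ((hdodd.coprime_two_left).coprime_dvd_right hod)
  -- find b with b^(2^n) = a and b a unit
  have hex : ∃ b : ZMod (s*p), IsUnit b ∧ b ^ (2 ^ n) = a := by
    rcases eq_or_lt_of_le (Nat.one_le_iff_ne_zero.mpr (fun h0 => by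
      have : ¬ Odd 0 := by decide
      exact this (h0 ▸ hoodd))) with h1 | h1
    · refine ⟨1, isUnit_one, ?_⟩
      have := orderOf_eq_one_iff.mp h1.symm
      rw [one_pow, this]
    · obtain ⟨k, -, hk⟩ := Nat.exists_mul_mod_eq_one_of_coprime hco h1
      refine ⟨a ^ k, ha.pow k, ?_⟩
      have hk2 : k * 2 ^ n % orderOf a = 1 := by rw [mul_comm]; exact hk
      rw [← pow_mul, ← pow_mod_orderOf, hk2, pow_one]
  obtain ⟨b, hb, hbn⟩ := hex
  lift b to (ZMod (s*p))ˣ using hb with u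
  have key : {x : ZMod (s*p) | x ^ (2 ^ n) = a}
      = (fun x => (↑u : ZMod (s*p)) * x) '' {x : ZMod (s*p) | x ^ (2 ^ n) = 1} := by
    ext x
    simp only [Set.mem_setOf_eq, Set.mem_image]
    constructor
    · intro hx
      refine ⟨(↑u⁻¹ : ZMod (s*p)) * x, ?_, ?_⟩
      · have huu : ((↑u⁻¹ : ZMod (s*p))) ^ (2 ^ n) * (↑u : ZMod (s*p)) ^ (2 ^ n) = 1 := by
          rw [← mul_pow, Units.inv_mul, one_pow]
        rw [mul_pow, hx, ← hbn, huu]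
      · rw [← mul_assoc, Units.mul_inv, one_mul]
    · rintro ⟨y, hy, rfl⟩
      rw [mul_pow, hy, mul_one, hbn]
  have hinj : Function.Injective (fun x : ZMod (s*p) => (↑u : ZMod (s*p)) * x) := by
    intro x y h
    have := congrArg (fun z => (↑u⁻¹ : ZMod (s*p)) * z) h
    simpa using this
  rw [key, Set.ncard_image_of_injective _ hinj]
end

section
/- The set 𝔻_{sp} = {w ∈ ZMod (s*p) : w is a unit, (w mod s)^(2^i) ≠ 1 in ZMod s for every natural number i, and (w mod p)^(2^j) ≠ 1 in ZMod p for every natural number j} has exactly 2^(k+l)·(q−1)·(r−1) elements. -/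
/-- The cryptographic set `𝔻_{sp}`: units none of whose iterated squares is
congruent to `1` modulo `s` or modulo `p`. -/
def Dsp (s p : ℕ) : Set (ZMod (s*p)) :=
  {w | IsUnit w ∧ (∀ i : ℕ, (modS s p w) ^ (2 ^ i) ≠ 1) ∧
       (∀ j : ℕ, (modP s p w) ^ (2 ^ j) ≠ 1)}

lemma count_aux (s k q : ℕ) (hs : s.Prime) (hq : Odd q)
    (hseq : s = 2 ^ k * q + 1) :
    Set.ncard {a : ZMod s | IsUnit a ∧ ∀ i : ℕ, a ^ (2 ^ i) ≠ 1} = 2 ^ k * (q - 1) := by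
  haveI : Fact s.Prime := ⟨hs⟩
  have hq0 : 0 < q := hq.pos
  have cardG : Fintype.card (ZMod s)ˣ = 2 ^ k * q := by
    rw [ZMod.card_units]; omega
  -- rewrite the set as an image of a set of units
  have hsetimg : {a : ZMod s | IsUnit a ∧ ∀ i : ℕ, a ^ (2 ^ i) ≠ 1}
      = Units.val '' {u : (ZMod s)ˣ | u ^ (2 ^ k) ≠ 1} := by
    ext a
    constructor
    · rintro ⟨⟨u, rfl⟩, hpow⟩
      refine ⟨u, fun h1 => hpow k ?_, rfl⟩
      rw [← Units.val_pow_eq_pow_val, h1, Units.val_one]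
    · rintro ⟨u, hu, rfl⟩
      refine ⟨u.isUnit, fun i h1 => ?_⟩
      have h2 : u ^ (2 ^ i) = 1 := Units.ext (by
        rw [Units.val_pow_eq_pow_val, h1, Units.val_one])
      have h3 : orderOf u ∣ 2 ^ i := orderOf_dvd_of_pow_eq_one h2
      obtain ⟨j, _, hoj⟩ := (Nat.dvd_prime_pow Nat.prime_two).1 h3
      have h4 : orderOf u ∣ 2 ^ k * q := cardG ▸ orderOf_dvd_card
      have h5 : Nat.Coprime (2 ^ j) q := Nat.Coprime.pow_left j (Nat.coprime_two_left.2 hq)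
      have h6 : orderOf u ∣ 2 ^ k := by
        rw [hoj] at h4 ⊢
        exact h5.dvd_of_dvd_mul_right h4
      exact hu (orderOf_dvd_iff_pow_eq_one.1 h6)
  rw [hsetimg, Set.ncard_image_of_injective _ Units.val_injective]
  -- kernel of the 2^k-power map
  set f : (ZMod s)ˣ →* (ZMod s)ˣ := powMonoidHom (2 ^ k) with hf
  obtain ⟨g, hg⟩ := IsCyclic.exists_generator (α := (ZMod s)ˣ)
  have hrange : f.range = Subgroup.zpowers (g ^ (2 ^ k)) := by
    ext x
    simp only [MonoidHom.mem_range, Subgroup.mem_zpowers_iff, hf, powMonoidHom_apply]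
    constructor
    · rintro ⟨y, rfl⟩
      obtain ⟨n, rfl⟩ := hg y
      exact ⟨n, by group⟩
    · rintro ⟨n, rfl⟩
      exact ⟨g ^ n, by group⟩
  have hordg : orderOf g = 2 ^ k * q := by
    rw [orderOf_eq_card_of_forall_mem_zpowers hg, Nat.card_eq_fintype_card, cardG]
  have hgcd : Nat.gcd (2 ^ k * q) (2 ^ k) = 2 ^ k := by
    rw [Nat.gcd_comm]
    exact Nat.gcd_eq_left (dvd_mul_right _ _)
  have hcardrange : Nat.card f.range = q := by
    rw [hrange, Nat.card_zpowers, orderOf_pow, hordg, hgcd,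
      Nat.mul_div_cancel_left _ (pow_pos (by norm_num) k)]
  have hcardker : Nat.card f.ker = 2 ^ k := by
    have h1 : Nat.card f.ker * f.ker.index = Nat.card (ZMod s)ˣ :=
      Subgroup.card_mul_index f.ker
    have h2 : f.ker.index = Nat.card f.range := by
      rw [Subgroup.index]
      exact Nat.card_congr (QuotientGroup.quotientKerEquivRange f).toEquiv
    have h3 : Nat.card (ZMod s)ˣ = 2 ^ k * q := by
      rw [Nat.card_eq_fintype_card, cardG]
    rw [h2, hcardrange, h3] at h1
    exact Nat.eq_of_mul_eq_mul_right hq0 h1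
  -- the complement of our set is the kernel
  have hcompl : {u : (ZMod s)ˣ | u ^ (2 ^ k) ≠ 1}ᶜ = (f.ker : Set (ZMod s)ˣ) := by
    ext u
    simp [hf, MonoidHom.mem_ker, powMonoidHom_apply]
  have htot := Set.ncard_add_ncard_compl {u : (ZMod s)ˣ | u ^ (2 ^ k) ≠ 1}
    (Set.toFinite _) (Set.toFinite _)
  rw [hcompl] at htot
  have hkerncard : (f.ker : Set (ZMod s)ˣ).ncard = 2 ^ k := by
    rw [← Nat.card_coe_set_eq, SetLike.coe_sort_coe, hcardker]
  have hcardG' : Nat.card (ZMod s)ˣ = 2 ^ k * q := by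
    rw [Nat.card_eq_fintype_card, cardG]
  rw [hkerncard, hcardG'] at htot
  have hmul : 2 ^ k * (q - 1) = 2 ^ k * q - 2 ^ k := by
    rw [Nat.mul_sub, mul_one]
  omega

theorem stmt_17 (s p k l q r : ℕ) (hs : s.Prime) (hp : p.Prime) (hsp : s ≠ p)
    (hk : 1 ≤ k) (hl : 1 ≤ l) (hq : Odd q) (hr : Odd r)
    (hseq : s = 2 ^ k * q + 1) (hpeq : p = 2 ^ l * r + 1) :
    (Dsp s p).ncard = 2 ^ (k + l) * (q - 1) * (r - 1) := by
  have hcop : Nat.Coprime s p := (Nat.coprime_primes hs hp).2 hsp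
  set e := ZMod.chineseRemainder hcop with he
  have hkey : ∀ w : ZMod (s*p), e w = (modS s p w, modP s p w) := by
    intro w
    have := RingHom.ext_zmod ((e : ZMod (s*p) →+* ZMod s × ZMod p))
      ((modS s p).prod (modP s p))
    calc e w = ((e : ZMod (s*p) →+* ZMod s × ZMod p)) w := rfl
      _ = ((modS s p).prod (modP s p)) w := by rw [this]
      _ = (modS s p w, modP s p w) := rfl
  set A : Set (ZMod s) := {a | IsUnit a ∧ ∀ i : ℕ, a ^ (2 ^ i) ≠ 1} with hA
  set B : Set (ZMod p) := {b | IsUnit b ∧ ∀ j : ℕ, b ^ (2 ^ j) ≠ 1} with hB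
  have hpre : Dsp s p = ⇑e ⁻¹' (A ×ˢ B) := by
    ext w
    simp only [Dsp, Set.mem_setOf_eq, Set.mem_preimage, hkey w, Set.mem_prod, hA, hB]
    constructor
    · rintro ⟨hw, h1, h2⟩
      exact ⟨⟨hw.map (modS s p), h1⟩, ⟨hw.map (modP s p), h2⟩⟩
    · rintro ⟨⟨ha, h1⟩, ⟨hb, h2⟩⟩
      refine ⟨?_, h1, h2⟩
      have hunit : IsUnit (e w) := by
        rw [hkey w]
        obtain ⟨u, hu⟩ := ha
        obtain ⟨v, hv⟩ := hb
        exact isUnit_iff_exists_inv.2 ⟨((u⁻¹ : (ZMod s)ˣ), (v⁻¹ : (ZMod p)ˣ)),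
          Prod.ext (by simp [← hu]) (by simp [← hv])⟩
      have := hunit.map (e.symm : ZMod s × ZMod p →+* ZMod (s*p))
      simpa using this
  rw [hpre, Set.ncard_preimage_of_injective_subset_range e.injective
    (by rw [Set.range_eq_univ.2 e.surjective]; exact Set.subset_univ _)]
  have hprod : (A ×ˢ B).ncard = A.ncard * B.ncard := by
    rw [← Nat.card_coe_set_eq, ← Nat.card_coe_set_eq, ← Nat.card_coe_set_eq,
      Nat.card_congr (Equiv.Set.prod A B), Nat.card_prod]
  rw [hprod, hA, hB, count_aux s k q hs hq hseq, count_aux p l r hp hr hpeq]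
  rw [pow_add]
  ring
end

section
/- The number of cyclic elements of 𝔻_{sp}, i.e. the cardinality of {w ∈ ZMod (s*p) : w is a unit, (w mod s)^(2^i) ≠ 1 for every natural i, (w mod p)^(2^j) ≠ 1 for every natural j, and w^(2^m) = w for some natural number m ≥ 1}, equals (q−1)·(r−1). -/
section AuxLemmas

lemma ncard_pow_eq_one {G : Type*} [Group G] [Fintype G] [IsCyclic G] {d : ℕ}
    (hd : d ∣ Fintype.card G) (hd0 : 0 < d) : {g : G | g ^ d = 1}.ncard = d := by
  classical
  obtain ⟨g, hg⟩ := IsCyclic.exists_ofOrder_eq_natCard (α := G)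
  rw [Nat.card_eq_fintype_card] at hg
  set n := Fintype.card G with hn
  have hn0 : 0 < n := Fintype.card_pos
  set a := g ^ (n / d) with ha
  have horder : orderOf a = d := by
    rw [ha, orderOf_pow, hg, Nat.gcd_eq_right (Nat.div_dvd_of_dvd hd),
      Nat.div_div_self hd hn0.ne']
  apply le_antisymm
  · rw [Set.ncard_eq_toFinset_card']
    calc ({g : G | g ^ d = 1} : Set G).toFinset.card
        = (Finset.univ.filter (fun b : G => b ^ d = 1)).card := by
          congr 1; ext x; simp
      _ ≤ d := IsCyclic.card_pow_eq_one_le hd0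
  · have hsub : (Subgroup.zpowers a : Set G) ⊆ {g : G | g ^ d = 1} := by
      rintro x ⟨m, rfl⟩
      simp only [Set.mem_setOf_eq]
      rw [← zpow_natCast, ← zpow_mul, mul_comm, zpow_mul, zpow_natCast,
        ← horder, pow_orderOf_eq_one, one_zpow]
    have := Set.ncard_le_ncard hsub (Set.toFinite _)
    rw [← Nat.card_coe_set_eq] at this
    simp only [SetLike.coe_sort_coe, Nat.card_zpowers, horder] at this
    exact this


lemma odd_order_char {M : Type*} [CommMonoid M] {a : M} {q : ℕ} (hq : Odd q)
    (ha : orderOf a ∣ q) : ∃ m : ℕ, 1 ≤ m ∧ a ^ (2 ^ m) = a := by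
  have hq0 : 0 < q := hq.pos
  have hd0 : 0 < orderOf a := Nat.pos_of_dvd_of_pos ha hq0
  have hodd : Odd (orderOf a) := hq.of_dvd_nat ha
  have hcop : Nat.Coprime 2 (orderOf a) := by
    rw [Nat.coprime_comm]
    exact hodd.coprime_two_right
  refine ⟨Nat.totient (orderOf a), Nat.totient_pos.mpr hd0, ?_⟩
  have hmod : 2 ^ Nat.totient (orderOf a) ≡ 1 [MOD orderOf a] :=
    Nat.ModEq.pow_totient hcop
  have hdvd : orderOf a ∣ 2 ^ Nat.totient (orderOf a) - 1 :=
    (Nat.modEq_iff_dvd' Nat.one_le_two_pow).mp hmod.symm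
  have h1 : a ^ (2 ^ Nat.totient (orderOf a) - 1) = 1 :=
    orderOf_dvd_iff_pow_eq_one.mp hdvd
  calc a ^ 2 ^ Nat.totient (orderOf a)
      = a ^ (2 ^ Nat.totient (orderOf a) - 1 + 1) := by
        rw [Nat.sub_add_cancel Nat.one_le_two_pow]
    _ = a := by rw [pow_succ, h1, one_mul]

lemma count_prime (s k q : ℕ) (hs : s.Prime) (hk : 1 ≤ k) (hq : Odd q)
    (hseq : s = 2 ^ k * q + 1) :
    {a : ZMod s | IsUnit a ∧ (∀ i : ℕ, a ^ (2 ^ i) ≠ 1) ∧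
      ∃ m : ℕ, 1 ≤ m ∧ a ^ (2 ^ m) = a}.ncard = q - 1 := by
  haveI : Fact s.Prime := ⟨hs⟩
  have hq0 : 0 < q := hq.pos
  have hcard : Fintype.card (ZMod s)ˣ = 2 ^ k * q := by
    rw [ZMod.card_units, hseq]; simp
  -- the set equals roots of x^q = 1 minus 1
  have hset : {a : ZMod s | IsUnit a ∧ (∀ i : ℕ, a ^ (2 ^ i) ≠ 1) ∧
      ∃ m : ℕ, 1 ≤ m ∧ a ^ (2 ^ m) = a} = {a : ZMod s | a ^ q = 1} \ {1} := by
    ext a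
    simp only [Set.mem_setOf_eq, Set.mem_diff, Set.mem_singleton_iff]
    constructor
    · rintro ⟨hu, hne, m, hm1, hm⟩
      have hane : a ≠ 1 := by simpa using hne 0
      refine ⟨?_, hane⟩
      have ha0 : a ≠ 0 := hu.ne_zero
      have h1 : a ^ (2 ^ m - 1) * a = 1 * a := by
        rw [← pow_succ, Nat.sub_add_cancel Nat.one_le_two_pow, hm, one_mul]
      have h2 : a ^ (2 ^ m - 1) = 1 := mul_right_cancel₀ ha0 h1
      have hd : orderOf a ∣ 2 ^ m - 1 := orderOf_dvd_of_pow_eq_one h2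
      have hodd : Odd (orderOf a) := by
        refine Odd.of_dvd_nat ?_ hd
        refine Nat.Even.sub_odd Nat.one_le_two_pow ?_ odd_one
        exact (Nat.even_pow.mpr ⟨even_two, by omega⟩)
      have hds : orderOf a ∣ 2 ^ k * q := by
        rw [← hcard]
        have : a ^ (s - 1) = 1 := ZMod.pow_card_sub_one_eq_one ha0
        refine orderOf_dvd_of_pow_eq_one ?_
        rwa [ZMod.card_units]
      have hcop : Nat.Coprime (orderOf a) (2 ^ k) :=
        Nat.Coprime.pow_right _ hodd.coprime_two_right
      have : orderOf a ∣ q := (Nat.Coprime.dvd_of_dvd_mul_left hcop hds)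
      exact orderOf_dvd_iff_pow_eq_one.mp this
    · rintro ⟨hpow, hne⟩
      have hu : IsUnit a := IsUnit.of_pow_eq_one hpow hq0.ne'
      have hdq : orderOf a ∣ q := orderOf_dvd_of_pow_eq_one hpow
      refine ⟨hu, ?_, odd_order_char hq hdq⟩
      intro i hi
      have h1 : orderOf a ∣ 2 ^ i := orderOf_dvd_of_pow_eq_one hi
      have hcop : Nat.Coprime (2 ^ i) q :=
        Nat.Coprime.pow_left _ (hq.coprime_two_left)
      have : orderOf a = 1 := Nat.eq_one_of_dvd_coprimes hcop h1 hdq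
      exact hne (orderOf_eq_one_iff.mp this)
  rw [hset]
  have h1mem : (1 : ZMod s) ∈ {a : ZMod s | a ^ q = 1} := by simp
  rw [Set.ncard_diff_singleton_of_mem h1mem]
  have himg : {a : ZMod s | a ^ q = 1} = Units.val '' {u : (ZMod s)ˣ | u ^ q = 1} := by
    ext a
    simp only [Set.mem_setOf_eq, Set.mem_image]
    constructor
    · intro ha
      obtain ⟨u, rfl⟩ := IsUnit.of_pow_eq_one ha hq0.ne'
      exact ⟨u, Units.val_eq_one.mp (by simpa using ha), rfl⟩
    · rintro ⟨u, hu, rfl⟩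
      rw [← Units.val_pow_eq_pow_val, hu, Units.val_one]
  rw [himg, Set.ncard_image_of_injective _ Units.val_injective]
  rw [ncard_pow_eq_one (by rw [hcard]; exact dvd_mul_left q (2 ^ k)) hq0]



lemma prod_isUnit_iff' {M N : Type*} [Monoid M] [Monoid N] {x : M × N} :
    IsUnit x ↔ IsUnit x.1 ∧ IsUnit x.2 := by
  constructor
  · intro h
    exact ⟨h.map (MonoidHom.fst M N), h.map (MonoidHom.snd M N)⟩
  · rintro ⟨⟨a, ha⟩, b, hb⟩
    exact ⟨⟨(↑a, ↑b), (↑a⁻¹, ↑b⁻¹), by simp, by simp⟩, Prod.ext ha hb⟩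

lemma iter_pow_two {M : Type*} [Monoid M] {a : M} {m : ℕ} (h : a ^ 2 ^ m = a) :
    ∀ t : ℕ, a ^ 2 ^ (m * t) = a := by
  intro t
  induction t with
  | zero => simp
  | succ t ih =>
      rw [Nat.mul_succ, pow_add, pow_mul, ih, h]


end AuxLemmas

theorem stmt_18 (s p k l q r : ℕ) (hs : s.Prime) (hp : p.Prime) (hsp : s ≠ p)
    (hk : 1 ≤ k) (hl : 1 ≤ l) (hq : Odd q) (hr : Odd r)
    (hseq : s = 2 ^ k * q + 1) (hpeq : p = 2 ^ l * r + 1) :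
    {w : ZMod (s*p) | IsUnit w ∧ (∀ i : ℕ, (modS s p w) ^ (2 ^ i) ≠ 1) ∧
      (∀ j : ℕ, (modP s p w) ^ (2 ^ j) ≠ 1) ∧
      (∃ m : ℕ, 1 ≤ m ∧ w ^ (2 ^ m) = w)}.ncard = (q - 1) * (r - 1) := by
  have hcop : Nat.Coprime s p := (Nat.coprime_primes hs hp).mpr hsp
  set χ := ZMod.chineseRemainder hcop with hχ
  set S₁ : Set (ZMod s) := {a : ZMod s | IsUnit a ∧ (∀ i : ℕ, a ^ (2 ^ i) ≠ 1) ∧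
      ∃ m : ℕ, 1 ≤ m ∧ a ^ (2 ^ m) = a} with hS₁
  set S₂ : Set (ZMod p) := {a : ZMod p | IsUnit a ∧ (∀ j : ℕ, a ^ (2 ^ j) ≠ 1) ∧
      ∃ m : ℕ, 1 ≤ m ∧ a ^ (2 ^ m) = a} with hS₂
  have hmodS : ∀ w : ZMod (s*p), modS s p w = (χ w).1 := by
    intro w
    have h := RingHom.ext_zmod (modS s p)
      ((RingHom.fst (ZMod s) (ZMod p)).comp (χ : ZMod (s*p) →+* ZMod s × ZMod p))
    rw [h]; rfl
  have hmodP : ∀ w : ZMod (s*p), modP s p w = (χ w).2 := by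
    intro w
    have h := RingHom.ext_zmod (modP s p)
      ((RingHom.snd (ZMod s) (ZMod p)).comp (χ : ZMod (s*p) →+* ZMod s × ZMod p))
    rw [h]; rfl
  have hinj : Function.Injective χ := χ.injective
  have hsetEq : {w : ZMod (s*p) | IsUnit w ∧ (∀ i : ℕ, (modS s p w) ^ (2 ^ i) ≠ 1) ∧
      (∀ j : ℕ, (modP s p w) ^ (2 ^ j) ≠ 1) ∧
      (∃ m : ℕ, 1 ≤ m ∧ w ^ (2 ^ m) = w)} = ⇑χ ⁻¹' (S₁ ×ˢ S₂) := by
    ext w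
    simp only [Set.mem_setOf_eq, Set.mem_preimage, Set.mem_prod, hS₁, hS₂, hmodS w, hmodP w]
    constructor
    · rintro ⟨hu, hi, hj, m, hm1, hm⟩
      have hu' : IsUnit (χ w) := hu.map (χ : ZMod (s*p) →+* ZMod s × ZMod p)
      obtain ⟨hu1, hu2⟩ := prod_isUnit_iff'.mp hu'
      have hpow : (χ w) ^ 2 ^ m = χ w := by rw [← map_pow, hm]
      exact ⟨⟨hu1, hi, m, hm1, congrArg Prod.fst hpow⟩,
             ⟨hu2, hj, m, hm1, congrArg Prod.snd hpow⟩⟩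
    · rintro ⟨⟨hu1, hi, m₁, hm₁, hp₁⟩, hu2, hj, m₂, hm₂, hp₂⟩
      have hu' : IsUnit (χ w) := prod_isUnit_iff'.mpr ⟨hu1, hu2⟩
      have hu : IsUnit w := by
        have := hu'.map (χ.symm : ZMod s × ZMod p →+* ZMod (s*p))
        simpa using this
      refine ⟨hu, hi, hj, m₁ * m₂, Nat.one_le_iff_ne_zero.mpr (by positivity), ?_⟩
      apply hinj
      rw [map_pow]
      apply Prod.ext
      · exact iter_pow_two hp₁ m₂
      · rw [mul_comm m₁ m₂]; exact iter_pow_two hp₂ m₁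
  rw [hsetEq, Set.ncard_preimage_of_injective_subset_range hinj
    (by rw [Set.range_eq_univ.mpr χ.surjective]; exact Set.subset_univ _)]
  have hncard : (S₁ ×ˢ S₂).ncard = S₁.ncard * S₂.ncard := by
    rw [← Nat.card_coe_set_eq, ← Nat.card_coe_set_eq, ← Nat.card_coe_set_eq,
      ← Nat.card_prod]
    exact Nat.card_congr (Equiv.Set.prod S₁ S₂)
  rw [hncard]
  rw [count_prime s k q hs hk hq hseq, count_prime p l r hp hl hr hpeq]
end
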